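/- Let (Ω, 𝒜, ℙ) be a probability space with a filtration (ℱ_t)_{t≥0}, let τ > 0, δ > 0, and let X : [0,τ] → ℝ be continuous with X(c) ≥ δ for all c ∈ [0,τ]; set s(x) := ∫₀ˣ X(u) du. Let ζ = (ζ_t)_{t≥0} be an (ℱ_t)-adapted process with continuous paths taking values in [0,τ], and suppose that for every continuously differentiable g : [0,τ] → ℝ with g(0) = g(τ) = 0, the process t ↦ ∫₀^{ζ_t} X(u) g(u) du − ∫₀ᵗ 2 g'(ζ_u) du is an (ℱ_t)-martingale. Then for every twice continuously differentiable H : [0, s(τ)] → ℝ with H'(0) = H'(s(τ)) = 0, the process t ↦ H(s(ζ_t)) − ∫₀ᵗ 2·X(ζ_u)·H''(s(ζ_u)) du is an (ℱ_t)-martingale. -/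

import Mathlib

open Set intervalIntegral MeasureTheory

/-- Lemma 6.6 (Relation to Brownian motion): if `ζ` solves the martingale problem for
`A^δ f = 2((1/X)f')'` — phrased via the domain characterization (6.10): for every `C¹`
function `g` on `[0,τ]` vanishing at the endpoints, the process
`t ↦ ∫₀^{ζ_t} X(u) g(u) du − ∫₀ᵗ 2 g'(ζ_u) du` is a martingale — then `B_t := s(ζ_t)`,
with scale function `s(x) = ∫₀ˣ X(u) du`, solves the martingale problem for
`B^δ H = 2·X_{s⁻¹(·)}·H''`: for every `C²` function `H` on `[0,s(τ)]` with
`H'(0) = H'(s(τ)) = 0`, the process `t ↦ H(s(ζ_t)) − ∫₀ᵗ 2 X(ζ_u) H''(s(ζ_u)) du`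
is a martingale. -/
theorem scale_transform_martingale_problem
    {Ω : Type*} {m : MeasurableSpace Ω} (μ : Measure Ω) [IsProbabilityMeasure μ]
    (ℱ : Filtration ℝ m)
    (τ δ : ℝ) (hτ : 0 < τ) (hδ : 0 < δ)
    (X : ℝ → ℝ) (hX : ContinuousOn X (Icc 0 τ)) (hXδ : ∀ c ∈ Icc (0:ℝ) τ, δ ≤ X c)
    (s : ℝ → ℝ) (hs : ∀ x, s x = ∫ u in (0:ℝ)..x, X u)
    (ζ : ℝ → Ω → ℝ)
    (hadapted : Adapted ℱ ζ)
    (hcont : ∀ ω, Continuous fun t => ζ t ω)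
    (hrange : ∀ t ω, ζ t ω ∈ Icc (0:ℝ) τ)
    (hMP : ∀ g g' : ℝ → ℝ,
      (∀ c ∈ Icc (0:ℝ) τ, HasDerivWithinAt g (g' c) (Icc 0 τ) c) →
      ContinuousOn g' (Icc 0 τ) → g 0 = 0 → g τ = 0 →
      Martingale
        (fun t ω => (∫ u in (0:ℝ)..(ζ t ω), X u * g u) - ∫ u in (0:ℝ)..t, 2 * g' (ζ u ω))
        ℱ μ)
    (H H' H'' : ℝ → ℝ)
    (hH : ∀ y ∈ Icc (0:ℝ) (s τ), HasDerivWithinAt H (H' y) (Icc 0 (s τ)) y)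
    (hH' : ∀ y ∈ Icc (0:ℝ) (s τ), HasDerivWithinAt H' (H'' y) (Icc 0 (s τ)) y)
    (hH'' : ContinuousOn H'' (Icc 0 (s τ)))
    (hH'0 : H' 0 = 0) (hH'sτ : H' (s τ) = 0) :
    Martingale
      (fun t ω => H (s (ζ t ω)) - ∫ u in (0:ℝ)..t, 2 * X (ζ u ω) * H'' (s (ζ u ω)))
      ℱ μ := by
  have hs0 : s 0 = 0 := by rw [hs]; simp
  -- interval integrability of X
  have hXint : ∀ x ∈ Icc (0:ℝ) τ, IntervalIntegrable X MeasureTheory.volume 0 x := by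
    intro x hx
    exact (hX.mono (Icc_subset_Icc le_rfl hx.2)).intervalIntegrable_of_Icc hx.1
  -- derivative of s within Icc 0 τ
  have hsd : ∀ c ∈ Icc (0:ℝ) τ, HasDerivWithinAt s (X c) (Icc 0 τ) c := by
    intro c hc
    haveI : Fact (c ∈ Icc (0:ℝ) τ) := ⟨hc⟩
    have := intervalIntegral.integral_hasDerivWithinAt_right (f := X)
      (s := Icc (0:ℝ) τ) (t := Icc (0:ℝ) τ)
      (hXint c hc)
      (hX.stronglyMeasurableAtFilter_nhdsWithin measurableSet_Icc c)
      (hX c hc)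
    exact this.congr (fun x _ => hs x) (hs c)
  have hscont : ContinuousOn s (Icc 0 τ) := fun c hc => (hsd c hc).continuousWithinAt
  -- s maps Icc 0 τ into Icc 0 (s τ)
  have hsmono : ∀ a ∈ Icc (0:ℝ) τ, ∀ b ∈ Icc (0:ℝ) τ, a ≤ b → s a ≤ s b := by
    intro a ha b hb hab
    rw [hs, hs]
    have h1 : IntervalIntegrable X MeasureTheory.volume a b :=
      ((hX.mono (Icc_subset_Icc ha.1 hb.2)).intervalIntegrable_of_Icc hab)
    have := intervalIntegral.integral_add_adjacent_intervals (hXint a ha) h1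
    rw [← this]
    have : 0 ≤ ∫ u in a..b, X u := by
      apply intervalIntegral.integral_nonneg hab
      intro u hu
      exact le_trans hδ.le (hXδ u ⟨le_trans ha.1 hu.1, le_trans hu.2 hb.2⟩)
    linarith
  have hsmap : MapsTo s (Icc 0 τ) (Icc 0 (s τ)) := by
    intro x hx
    constructor
    · rw [← hs0]; exact hsmono 0 ⟨le_rfl, hτ.le⟩ x hx hx.1
    · exact hsmono x hx τ ⟨hτ.le, le_rfl⟩ hx.2
  -- the test function g = H' ∘ s
  set g : ℝ → ℝ := fun c => H' (s c) with hgdef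
  set g' : ℝ → ℝ := fun c => X c * H'' (s c) with hg'def
  have hg : ∀ c ∈ Icc (0:ℝ) τ, HasDerivWithinAt g (g' c) (Icc 0 τ) c := by
    intro c hc
    have := (hH' (s c) (hsmap hc)).comp c (hsd c hc) hsmap
    simpa [hgdef, hg'def, mul_comm, Function.comp_def] using this
  have hg'cont : ContinuousOn g' (Icc 0 τ) :=
    hX.mul (hH''.comp hscont hsmap)
  have hg0 : g 0 = 0 := by simp [hgdef, hs0, hH'0]
  have hgτ : g τ = 0 := by simp [hgdef, hH'sτ]
  have M := hMP g g' hg hg'cont hg0 hgτ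
  -- FTC: ∫₀ˣ X u * g u du = H (s x) - H 0
  have hHs : ∀ c ∈ Icc (0:ℝ) τ, HasDerivWithinAt (fun u => H (s u)) (X c * g c) (Icc 0 τ) c := by
    intro c hc
    have := (hH (s c) (hsmap hc)).comp c (hsd c hc) hsmap
    simpa [hgdef, mul_comm, Function.comp_def] using this
  have hHscont : ContinuousOn (fun u => H (s u)) (Icc 0 τ) :=
    fun c hc => (hHs c hc).continuousWithinAt
  have hFTC : ∀ x ∈ Icc (0:ℝ) τ, (∫ u in (0:ℝ)..x, X u * g u) = H (s x) - H 0 := by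
    intro x hx
    have := intervalIntegral.integral_eq_sub_of_hasDeriv_right_of_le hx.1
      (hHscont.mono (Icc_subset_Icc le_rfl hx.2))
      (fun u hu => by
        have hu' : u ∈ Icc (0:ℝ) τ := ⟨hu.1.le, hu.2.le.trans hx.2⟩
        have hmem : Icc (0:ℝ) τ ∈ nhds u :=
          Icc_mem_nhds hu.1 (lt_of_lt_of_le hu.2 hx.2)
        exact ((hHs u hu').hasDerivAt hmem).hasDerivWithinAt)
      (((hX.mul (fun c hc => ((hg c hc).continuousWithinAt))).mono
        (Icc_subset_Icc le_rfl hx.2)).intervalIntegrable_of_Icc hx.1)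
    simp only [Pi.mul_apply] at this
    rw [this, hs0]
  -- conclude
  have heq : (fun t ω => H (s (ζ t ω)) - ∫ u in (0:ℝ)..t, 2 * X (ζ u ω) * H'' (s (ζ u ω)))
      = fun t ω => ((∫ u in (0:ℝ)..(ζ t ω), X u * g u) - ∫ u in (0:ℝ)..t, 2 * g' (ζ u ω))
        + H 0 := by
    funext t ω
    rw [hFTC (ζ t ω) (hrange t ω)]
    have : (fun u => 2 * X (ζ u ω) * H'' (s (ζ u ω))) = fun u => 2 * g' (ζ u ω) := by
      funext u; simp [hg'def]; ring
    rw [this]; ring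
  rw [heq]
  exact M.add (martingale_const ℱ μ (H 0))
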